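/- If M is a practical number and p is a prime with gcd(p, M) = 1, then for every k ≥ 1 the number p^k·M is practical if and only if p ≤ σ(M) + 1. -/

import Mathlib

/-- A positive integer `n` is practical if every integer `m` with `1 ≤ m ≤ n`
is a sum of distinct positive divisors of `n`. -/
def IsPractical (n : ℕ) : Prop :=
  0 < n ∧ ∀ m : ℕ, 1 ≤ m → m ≤ n →
    ∃ D : Finset ℕ, D ⊆ n.divisors ∧ m = ∑ d ∈ D, d

/-- A "complete" finite set (each element at most one more than the sum of the
smaller elements) represents every number up to its total sum. -/
lemma complete_rep : ∀ (S : Finset ℕ),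
    (∀ a ∈ S, a ≤ 1 + ∑ b ∈ S.filter (· < a), b) →
    ∀ t, t ≤ ∑ b ∈ S, b → ∃ D ⊆ S, t = ∑ d ∈ D, d := by
  intro S
  induction S using Finset.strongInduction with
  | _ S ih =>
    intro hS t ht
    rcases S.eq_empty_or_nonempty with rfl | hne
    · simp only [Finset.sum_empty, Nat.le_zero] at ht
      exact ⟨∅, by simp, by simp [ht]⟩
    · set a := S.max' hne with ha
      have haS : a ∈ S := S.max'_mem hne
      set S' := S.erase a with hS'
      have hsub : S' ⊂ S := Finset.erase_ssubset haS
      have hlt : ∀ b ∈ S', b < a := fun b hb =>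
        lt_of_le_of_ne (S.le_max' b (Finset.mem_of_mem_erase hb)) (Finset.ne_of_mem_erase hb)
      have hcond : ∀ b ∈ S', b ≤ 1 + ∑ c ∈ S'.filter (· < b), c := by
        intro b hb
        have h1 := hS b (Finset.mem_of_mem_erase hb)
        have hfe : S.filter (· < b) = S'.filter (· < b) := by
          ext c
          simp only [Finset.mem_filter, hS', Finset.mem_erase]
          constructor
          · rintro ⟨hcS, hcb⟩
            refine ⟨⟨?_, hcS⟩, hcb⟩
            rintro rfl
            exact absurd hcb (not_lt.2 (hlt b hb).le)
          · rintro ⟨⟨_, hcS⟩, hcb⟩; exact ⟨hcS, hcb⟩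
        rwa [hfe] at h1
      have hsplit : ∑ b ∈ S, b = a + ∑ b ∈ S', b := (Finset.add_sum_erase S id haS).symm
      rcases le_or_gt t (∑ b ∈ S', b) with h | h
      · obtain ⟨D, hD, hDt⟩ := ih S' hsub hcond t h
        exact ⟨D, hD.trans (Finset.erase_subset _ _), hDt⟩
      · have hfa : S.filter (· < a) = S' := by
          ext c
          simp only [Finset.mem_filter, hS', Finset.mem_erase]
          constructor
          · rintro ⟨hcS, hca⟩; exact ⟨Nat.ne_of_lt hca, hcS⟩
          · rintro ⟨hne', hcS⟩
            exact ⟨hcS, lt_of_le_of_ne (S.le_max' c hcS) hne'⟩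
        have hale : a ≤ t := by
          have := hS a haS
          rw [hfa] at this
          omega
        have htr : t - a ≤ ∑ b ∈ S', b := by omega
        obtain ⟨D, hD, hDt⟩ := ih S' hsub hcond (t - a) htr
        have haD : a ∉ D := fun hmem => (Finset.ne_of_mem_erase (hD hmem)) rfl
        refine ⟨insert a D, ?_, ?_⟩
        · intro x hx
          rcases Finset.mem_insert.1 hx with rfl | hx
          · exact haS
          · exact Finset.mem_of_mem_erase (hD hx)
        · rw [Finset.sum_insert haD, ← hDt]
          omega

/-- A practical number represents every number up to σ(n). -/
lemma rep_upto_sigma (n : ℕ) (h : IsPractical n) :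
    ∀ t, t ≤ ∑ d ∈ n.divisors, d → ∃ D ⊆ n.divisors, t = ∑ d ∈ D, d := by
  apply complete_rep
  intro a ha
  have hpos := h.1
  have ha1 : 1 ≤ a := Nat.pos_of_mem_divisors ha
  rcases Nat.lt_or_ge a 2 with h2 | h2
  · omega
  · have han : a ≤ n := Nat.le_of_dvd hpos (Nat.dvd_of_mem_divisors ha)
    obtain ⟨D, hD, hDt⟩ := h.2 (a - 1) (by omega) (by omega)
    have hmem : ∀ d ∈ D, d < a := by
      intro d hd
      have : d ≤ ∑ x ∈ D, x := Finset.single_le_sum (fun i _ => Nat.zero_le i) hd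
      omega
    have hsub : D ⊆ n.divisors.filter (· < a) := fun d hd =>
      Finset.mem_filter.2 ⟨hD hd, hmem d hd⟩
    have h4 : ∑ d ∈ D, d ≤ ∑ d ∈ n.divisors.filter (· < a), d :=
      Finset.sum_le_sum_of_subset (f := fun x => x) hsub
    omega

lemma my_geom_le (p : ℕ) (hp1 : 1 ≤ p) : ∀ n, p ^ n ≤ (∑ j ∈ Finset.range n, p ^ j) * (p - 1) + 1 := by
  intro n
  induction n with
  | zero => simp
  | succ n ihn =>
    rw [Finset.sum_range_succ, pow_succ, add_mul]
    have h2 : p ^ n * p = p ^ n * (p - 1) + p ^ n := by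
      have h3 : p - 1 + 1 = p := Nat.succ_pred_eq_of_pos hp1
      calc p ^ n * p = p ^ n * (p - 1 + 1) := by rw [h3]
        _ = p ^ n * (p - 1) + p ^ n := by ring
    omega

/-- digit decomposition lemma -/
lemma digits_exist (p s : ℕ) (hp1 : 1 ≤ p) (hps : p ≤ s + 1) :
    ∀ k t, t ≤ (∑ j ∈ Finset.range (k + 1), p ^ j) * s →
    ∃ a : ℕ → ℕ, (∀ j, a j ≤ s) ∧ t = ∑ j ∈ Finset.range (k + 1), p ^ j * a j := by
  intro k
  induction k with
  | zero =>
    intro t ht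
    have ht' : t ≤ s := by simpa using ht
    exact ⟨fun j => if j = 0 then t else 0,
      fun j => by by_cases h : j = 0 <;> simp [h, ht'], by simp⟩
  | succ k ihk =>
    intro t ht
    have hppos : 0 < p ^ (k + 1) := Nat.pow_pos hp1
    obtain ⟨q, hqs, hle, hr⟩ :
        ∃ q, q ≤ s ∧ p ^ (k + 1) * q ≤ t ∧
          t - p ^ (k + 1) * q ≤ (∑ j ∈ Finset.range (k + 1), p ^ j) * s := by
      rcases le_or_gt s (t / p ^ (k + 1)) with hcase | hcase
      · refine ⟨s, le_refl s, ?_, ?_⟩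
        · calc p ^ (k + 1) * s ≤ p ^ (k + 1) * (t / p ^ (k + 1)) :=
              Nat.mul_le_mul_left _ hcase
            _ ≤ t := Nat.mul_div_le t _
        · rw [Finset.sum_range_succ, add_mul] at ht
          omega
      · refine ⟨t / p ^ (k + 1), hcase.le, Nat.mul_div_le t _, ?_⟩
        have hdm := Nat.div_add_mod t (p ^ (k + 1))
        have h1 : t % p ^ (k + 1) < p ^ (k + 1) := Nat.mod_lt _ hppos
        have h2 := my_geom_le p hp1 (k + 1)
        have h3 : (∑ j ∈ Finset.range (k + 1), p ^ j) * (p - 1) ≤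
            (∑ j ∈ Finset.range (k + 1), p ^ j) * s :=
          Nat.mul_le_mul_left _ (by omega)
        omega
    obtain ⟨a, haj, hat⟩ := ihk (t - p ^ (k + 1) * q) hr
    refine ⟨Function.update a (k + 1) q, ?_, ?_⟩
    · intro j
      rcases eq_or_ne j (k + 1) with rfl | hj
      · simpa using hqs
      · simpa [Function.update_of_ne hj] using haj j
    · rw [Finset.sum_range_succ]
      have h1 : ∑ j ∈ Finset.range (k + 1), p ^ j * Function.update a (k + 1) q j
          = ∑ j ∈ Finset.range (k + 1), p ^ j * a j := by
        apply Finset.sum_congr rfl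
        intro j hj
        have : j ≠ k + 1 := by have := Finset.mem_range.1 hj; omega
        rw [Function.update_of_ne this]
      rw [h1, Function.update_self, ← hat]
      omega

lemma practical_of_le (M p k : ℕ) (hM : IsPractical M) (hp : p.Prime)
    (hcop : Nat.Coprime p M)
    (hps : p ≤ (∑ d ∈ M.divisors, d) + 1) : IsPractical (p ^ k * M) := by
  have hMpos := hM.1
  have hppos : 0 < p := hp.pos
  constructor
  · exact Nat.mul_pos (Nat.pow_pos hppos) hMpos
  intro m h1 hm
  set s := ∑ d ∈ M.divisors, d with hs
  have hMs : M ≤ s := Finset.single_le_sum (f := id) (fun i _ => Nat.zero_le i)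
      (Nat.mem_divisors_self M hMpos.ne')
  have hpk : p ^ k ≤ ∑ j ∈ Finset.range (k + 1), p ^ j :=
    Finset.single_le_sum (f := fun j => p ^ j) (fun i _ => Nat.zero_le _)
      (Finset.mem_range.2 (Nat.lt_succ_self k))
  have hmle : m ≤ (∑ j ∈ Finset.range (k + 1), p ^ j) * s := by
    calc m ≤ p ^ k * M := hm
      _ ≤ (∑ j ∈ Finset.range (k + 1), p ^ j) * s := Nat.mul_le_mul hpk hMs
  obtain ⟨a, haj, hat⟩ := digits_exist p s hppos hps k m hmle
  have hrep : ∀ j, ∃ D ⊆ M.divisors, a j = ∑ d ∈ D, d :=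
    fun j => rep_upto_sigma M hM (a j) (haj j)
  choose D hDsub hDsum using hrep
  have hpk0 : ∀ j : ℕ, (p : ℕ) ^ j ≠ 0 := fun j => (Nat.pow_pos hppos).ne'
  -- coprimality: divisors of M are coprime to p
  have hcopd : ∀ d, d ∣ M → ¬ p ∣ d := by
    intro d hd hpd
    have h1 : p ∣ Nat.gcd p M := Nat.dvd_gcd dvd_rfl (hpd.trans hd)
    have h2 : Nat.gcd p M = 1 := hcop
    rw [h2] at h1
    have := Nat.le_of_dvd one_pos h1
    have := hp.one_lt
    omega
  refine ⟨(Finset.range (k + 1)).biUnion (fun j => (D j).image (fun d => p ^ j * d)), ?_, ?_⟩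
  · intro e he
    obtain ⟨j, hj, he⟩ := Finset.mem_biUnion.1 he
    obtain ⟨d, hd, rfl⟩ := Finset.mem_image.1 he
    have hjk : j ≤ k := Nat.lt_succ_iff.1 (Finset.mem_range.1 hj)
    refine Nat.mem_divisors.2 ⟨mul_dvd_mul (pow_dvd_pow p hjk)
      (Nat.dvd_of_mem_divisors (hDsub j hd)), ?_⟩
    exact (Nat.mul_pos (Nat.pow_pos hppos) hMpos).ne'
  · have hdisj : ∀ j ∈ Finset.range (k + 1), ∀ j' ∈ Finset.range (k + 1), j ≠ j' →
        Disjoint ((D j).image (fun d => p ^ j * d)) ((D j').image (fun d => p ^ j' * d)) := by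
      intro j _ j' _ hjj'
      rw [Finset.disjoint_left]
      rintro x hx hx'
      obtain ⟨d, hd, rfl⟩ := Finset.mem_image.1 hx
      obtain ⟨d', hd', heq⟩ := Finset.mem_image.1 hx'
      -- p^j' * d' = p^j * d with j ≠ j'
      have hdM : d ∣ M := Nat.dvd_of_mem_divisors (hDsub j hd)
      have hd'M : d' ∣ M := Nat.dvd_of_mem_divisors (hDsub j' hd')
      have hdpos : 0 < d := Nat.pos_of_mem_divisors (hDsub j hd)
      have hd'pos : 0 < d' := Nat.pos_of_mem_divisors (hDsub j' hd')
      rcases Nat.lt_or_ge j j' with hlt | hge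
      · -- p^j' d' = p^j d, j < j' ⇒ p ∣ d
        have : p ^ j * (p ^ (j' - j) * d') = p ^ j * d := by
          rw [← mul_assoc, ← pow_add]
          have : j + (j' - j) = j' := by omega
          rw [this]; exact heq
        have h2 : p ^ (j' - j) * d' = d := Nat.eq_of_mul_eq_mul_left (Nat.pow_pos hppos) this
        have hpd : p ∣ d := by
          rw [← h2]
          exact Dvd.dvd.mul_right (dvd_pow_self p (by omega)) d'
        exact hcopd d hdM hpd
      · have hlt' : j' < j := by omega
        have : p ^ j' * (p ^ (j - j') * d) = p ^ j' * d' := by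
          rw [← mul_assoc, ← pow_add]
          have : j' + (j - j') = j := by omega
          rw [this]; exact heq.symm
        have h2 : p ^ (j - j') * d = d' := Nat.eq_of_mul_eq_mul_left (Nat.pow_pos hppos) this
        have hpd : p ∣ d' := by
          rw [← h2]
          exact Dvd.dvd.mul_right (dvd_pow_self p (by omega)) d
        exact hcopd d' hd'M hpd
    rw [Finset.sum_biUnion]
    · rw [hat]
      apply Finset.sum_congr rfl
      intro j _
      rw [Finset.sum_image]
      · rw [← Finset.mul_sum, hDsum j]
      · intro x _ y _ hxy
        exact Nat.eq_of_mul_eq_mul_left (Nat.pow_pos hppos) hxy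
    · intro j hj j' hj' hjj'
      exact hdisj j hj j' hj' hjj'

theorem stewart_key (M p k : ℕ) (hM : IsPractical M) (hp : p.Prime)
    (hcop : Nat.Coprime p M) (hk : 1 ≤ k) :
    IsPractical (p ^ k * M) ↔ p ≤ (∑ d ∈ M.divisors, d) + 1 := by
  constructor
  · intro h
    by_contra hlt
    push_neg at hlt
    set s := ∑ d ∈ M.divisors, d with hs
    have hMpos := hM.1
    have hMs : M ≤ s := Finset.single_le_sum (f := id) (fun i _ => Nat.zero_le i)
        (Nat.mem_divisors_self M hMpos.ne')
    have hpk : p ≤ p ^ k := Nat.le_self_pow (by omega) p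
    have hmle : s + 1 ≤ p ^ k * M := by
      calc s + 1 ≤ p := hlt.le
        _ ≤ p ^ k := hpk
        _ ≤ p ^ k * M := Nat.le_mul_of_pos_right _ hMpos
    obtain ⟨Dset, hD, hDsum⟩ := h.2 (s + 1) (by omega) hmle
    have hsub : Dset ⊆ M.divisors := by
      intro d hd
      have hdpos : 0 < d := Nat.pos_of_mem_divisors (hD hd)
      have hdle : d ≤ s + 1 := by
        have : d ≤ ∑ x ∈ Dset, x := Finset.single_le_sum (fun i _ => Nat.zero_le i) hd
        omega
      have hdlt : d < p := by omega
      have hdvd : d ∣ p ^ k * M := Nat.dvd_of_mem_divisors (hD hd)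
      have hcopd : Nat.Coprime d (p ^ k) := by
        apply Nat.Coprime.pow_right
        have hnd : ¬ p ∣ d := fun h => absurd (Nat.le_of_dvd hdpos h) (by omega)
        exact (hp.coprime_iff_not_dvd.mpr hnd).symm
      have : d ∣ M := (Nat.Coprime.dvd_of_dvd_mul_left hcopd) hdvd
      exact Nat.mem_divisors.2 ⟨this, hMpos.ne'⟩
    have h4 : ∑ d ∈ Dset, d ≤ ∑ d ∈ M.divisors, d :=
      Finset.sum_le_sum_of_subset (f := fun x => x) hsub
    omega
  · intro hps
    exact practical_of_le M p k hM hp hcop hps
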